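/- (Boundedness property under independence.) Suppose μ is a product probability measure, i.e., the coordinates x₁,…,x_p are independent, and Var(f) > 0. Then for every nonempty v ⊆ {1,…,p}, the covariance-based Sobol' index reduces to the variance-based one, S_v = Cov(f_v, f)/Var(f) = Var(f_v)/Var(f), and consequently 0 ≤ S_v ≤ 1. -/

import Mathlib

open MeasureTheory ProbabilityTheory

/-- The sub-σ-algebra generated by the coordinates in `v`. -/
def coordSigma {p : ℕ} (Ω : Fin p → Type*) [∀ i, MeasurableSpace (Ω i)]
    (v : Finset (Fin p)) : MeasurableSpace (∀ i, Ω i) :=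
  ⨆ i ∈ v, MeasurableSpace.comap (fun x : ∀ j, Ω j => x i) inferInstance

/-- The recursively defined (generalized ANOVA) components `f_v`. -/
noncomputable def anovaComp {p : ℕ} {Ω : Fin p → Type*} [∀ i, MeasurableSpace (Ω i)]
    (μ : Measure (∀ i, Ω i)) (f : (∀ i, Ω i) → ℝ) : Finset (Fin p) → (∀ i, Ω i) → ℝ
  | v =>
    if v = ∅ then fun _ => ∫ x, f x ∂μ
    else μ[f | coordSigma Ω v] - ∑ w ∈ v.ssubsets.attach, anovaComp μ f w.1
  termination_by v => v.card
  decreasing_by exact Finset.card_lt_card (Finset.mem_ssubsets.mp w.2)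

/-- Variance (`‖f - f₀‖₂²`). -/
noncomputable def fVar {α : Type*} [MeasurableSpace α] (μ : Measure α) (f : α → ℝ) : ℝ :=
  ∫ x, (f x - ∫ y, f y ∂μ) ^ 2 ∂μ

/-- Covariance. -/
noncomputable def fCov {α : Type*} [MeasurableSpace α] (μ : Measure α) (g f : α → ℝ) : ℝ :=
  ∫ x, (g x - ∫ y, g y ∂μ) * (f x - ∫ y, f y ∂μ) ∂μ

/-- Sobol' index `S_v`. -/
noncomputable def sobolIndex {p : ℕ} {Ω : Fin p → Type*} [∀ i, MeasurableSpace (Ω i)]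
    (μ : Measure (∀ i, Ω i)) (f : (∀ i, Ω i) → ℝ) (v : Finset (Fin p)) : ℝ :=
  fCov μ (anovaComp μ f v) f / fVar μ f

/-- Total Sobol' index `T_u`. -/
noncomputable def totalSobolIndex {p : ℕ} {Ω : Fin p → Type*} [∀ i, MeasurableSpace (Ω i)]
    (μ : Measure (∀ i, Ω i)) (f : (∀ i, Ω i) → ℝ) (u : Finset (Fin p)) : ℝ :=
  ∑ v ∈ Finset.univ.powerset.filter (fun v => (v ∩ u).Nonempty), sobolIndex μ f v

/-! ### Auxiliary lemmas -/

/-- `L²` membership of conditional expectation. -/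
lemma memL2_condexp {α : Type*} {m : MeasurableSpace α} [m0 : MeasurableSpace α]
    (μ : Measure α) [IsProbabilityMeasure μ] (hm : m ≤ m0) {g : α → ℝ}
    (hg : MemLp g 2 μ) : MemLp (μ[g|m]) 2 μ := by
  haveI : SigmaFinite (μ.trim hm) := by
    have : IsFiniteMeasure (μ.trim hm) := isFiniteMeasure_trim hm
    infer_instance
  obtain ⟨h, hmem, hsm, hint⟩ : ∃ h : α → ℝ, MemLp h 2 μ ∧ AEStronglyMeasurable[m] h μ ∧
      ∀ s, MeasurableSet[m] s → μ s < ⊤ → ∫ x in s, h x ∂μ = ∫ x in s, g x ∂μ := by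
    set gL : Lp ℝ 2 μ := hg.toLp g with hgL
    refine ⟨((condExpL2 ℝ ℝ hm gL : Lp ℝ 2 μ) : α → ℝ),
      Lp.memLp (condExpL2 ℝ ℝ hm gL : Lp ℝ 2 μ),
      aestronglyMeasurable_condExpL2 (𝕜 := ℝ) hm gL, fun s hs hμs => ?_⟩
    rw [integral_condExpL2_eq hm gL hs hμs.ne]
    exact setIntegral_congr_ae (hm s hs) ((hg.coeFn_toLp).mono fun x hx _ => hx)
  have hcd : h =ᵐ[μ] (μ[g|m]) :=
    ae_eq_condExp_of_forall_setIntegral_eq hm (hg.integrable one_le_two)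
      (fun s _ _ => (hmem.integrable one_le_two).integrableOn) hint hsm
  exact hmem.ae_eq hcd

/-- Product of two `L²` functions is integrable. -/
lemma memL2_mul {α : Type*} [MeasurableSpace α] {μ : Measure α} {g h : α → ℝ}
    (hg : MemLp g 2 μ) (hh : MemLp h 2 μ) : Integrable (fun x => g x * h x) μ := by
  have heq : (fun x => g x * h x)
      = fun x => ((g x + h x) ^ 2 - g x ^ 2 - h x ^ 2) / 2 := by ext x; ring
  rw [heq]
  exact (((hg.add hh).integrable_sq.sub hg.integrable_sq).sub hh.integrable_sq).div_const 2

section aux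
variable {p : ℕ} {Ω : Fin p → Type*} [∀ i, MeasurableSpace (Ω i)]

lemma coordSigma_le (v : Finset (Fin p)) : coordSigma Ω v ≤ MeasurableSpace.pi :=
  iSup₂_le fun i _ => (measurable_pi_apply i).comap_le

lemma coordSigma_mono {u v : Finset (Fin p)} (h : u ⊆ v) : coordSigma Ω u ≤ coordSigma Ω v :=
  iSup₂_le fun i hi => le_iSup₂ (f := fun i (_ : i ∈ v) =>
    MeasurableSpace.comap (fun x : ∀ j, Ω j => x i) inferInstance) i (h hi)

lemma coordSigma_empty : coordSigma Ω (∅ : Finset (Fin p)) = ⊥ := by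
  simp [coordSigma]

lemma coordSigma_union (a b : Finset (Fin p)) :
    coordSigma Ω (a ∪ b) = coordSigma Ω a ⊔ coordSigma Ω b := by
  simp only [coordSigma, Finset.mem_union, iSup_or, iSup_sup_eq]

variable (ν : ∀ i, Measure (Ω i)) [∀ i, IsProbabilityMeasure (ν i)]

lemma iIndep_coord : iIndep (fun i : Fin p =>
    MeasurableSpace.comap (fun x : ∀ j, Ω j => x i) inferInstance) (Measure.pi ν) := by
  have h : iIndepFun
      (fun (i : Fin p) (x : ∀ j, Ω j) => x i) (Measure.pi ν) := by
    rw [iIndepFun_iff_measure_inter_preimage_eq_mul]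
    intro S sets hsets
    classical
    have hpre : ∀ i, MeasurableSet (sets i) →
        Measure.pi ν ((fun x : ∀ j, Ω j => x i) ⁻¹' sets i) = ν i (sets i) := by
      intro i hi
      rw [← Set.univ_pi_update_univ, Measure.pi_pi]
      rw [Finset.prod_eq_single i (fun j _ hj => by simp [Function.update_of_ne hj]) (by simp)]
      simp
    have h1 : (⋂ i ∈ S, (fun x : ∀ j, Ω j => x i) ⁻¹' sets i)
        = Set.pi Set.univ (fun i => if i ∈ S then sets i else Set.univ) := by
      ext x
      simp only [Set.mem_iInter, Set.mem_preimage, Set.mem_pi, Set.mem_univ, true_implies]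
      constructor
      · intro h i; split_ifs with hi; exacts [h i hi, Set.mem_univ _]
      · intro h i hi; have := h i; rwa [if_pos hi] at this
    rw [h1, Measure.pi_pi]
    have h2 : ∀ i, ν i (if i ∈ S then sets i else Set.univ)
        = if i ∈ S then ν i (sets i) else 1 := by
      intro i; split_ifs <;> simp
    simp only [h2]
    rw [Finset.prod_ite_mem Finset.univ S (fun i => ν i (sets i)), Finset.univ_inter]
    exact (Finset.prod_congr rfl fun i hi => (hpre i (hsets i hi)).symm)
  exact h.iIndep

lemma indep_coordSigma {a b : Finset (Fin p)} (hab : Disjoint a b) :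
    Indep (coordSigma Ω a) (coordSigma Ω b) (Measure.pi ν) := by
  have := indep_iSup_of_disjoint (μ := Measure.pi ν)
    (m := fun i : Fin p => MeasurableSpace.comap (fun x : ∀ j, Ω j => x i) inferInstance)
    (fun i => (measurable_pi_apply i).comap_le) (iIndep_coord ν)
    (S := ↑a) (T := ↑b) (by exact_mod_cast hab)
  simpa [coordSigma] using this

lemma trim_sf (v : Finset (Fin p)) : SigmaFinite ((Measure.pi ν).trim (coordSigma_le v)) := by
  have : IsFiniteMeasure ((Measure.pi ν).trim (coordSigma_le v)) := isFiniteMeasure_trim _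
  infer_instance

/-- Key lemma: under the product measure, conditioning a `coordSigma Ω v`-measurable function
on `coordSigma Ω w` is the same as conditioning on `coordSigma Ω (v ∩ w)`. -/
lemma condexp_coordSigma (v w : Finset (Fin p)) {g : (∀ i, Ω i) → ℝ}
    (hgm : StronglyMeasurable[coordSigma Ω v] g) (hgi : Integrable g (Measure.pi ν)) :
    (Measure.pi ν)[g | coordSigma Ω w] =ᵐ[Measure.pi ν]
      (Measure.pi ν)[g | coordSigma Ω (v ∩ w)] := by
  classical
  set μ := Measure.pi ν with hμdef
  haveI := trim_sf ν w
  haveI := trim_sf ν (v ∩ w)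
  have key : ∀ (φ : (∀ i, Ω i) → ℝ), Integrable φ μ → StronglyMeasurable[coordSigma Ω v] φ →
      ∀ B C : Set (∀ i, Ω i), MeasurableSet[coordSigma Ω v] B →
      MeasurableSet[coordSigma Ω (w \ v)] C →
      ∫ x in B ∩ C, φ x ∂μ = (∫ x in B, φ x ∂μ) * (μ C).toReal := by
    intro φ hφi hφm B C hB hC
    have hBa : MeasurableSet B := coordSigma_le v B hB
    have hCa : MeasurableSet C := coordSigma_le (w \ v) C hC
    have hindep : Indep (coordSigma Ω v) (coordSigma Ω (w \ v)) μ :=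
      indep_coordSigma ν (Finset.disjoint_sdiff)
    have hind : IndepFun (B.indicator φ) (C.indicator (fun _ => (1:ℝ))) μ := by
      rw [IndepFun_iff]
      intro t1 t2 h1 h2
      refine (Indep_iff _ _ _).mp hindep t1 t2 ?_ ?_
      · exact ((hφm.indicator hB).measurable.comap_le) t1 h1
      · exact (stronglyMeasurable_const.indicator hC).measurable.comap_le t2 h2
    have hi1 : Integrable (B.indicator φ) μ := hφi.indicator hBa
    have hi2 : Integrable (C.indicator (fun _ => (1:ℝ))) μ := (integrable_const 1).indicator hCa
    have hmul := IndepFun.integral_mul_eq_mul_integral hind hi1.aestronglyMeasurable hi2.aestronglyMeasurable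
    have heq : (B ∩ C).indicator φ = B.indicator φ * C.indicator (fun _ => (1:ℝ)) := by
      ext x
      by_cases hxB : x ∈ B <;> by_cases hxC : x ∈ C <;>
        simp [Set.indicator, hxB, hxC, Set.mem_inter_iff]
    calc ∫ x in B ∩ C, φ x ∂μ = ∫ x, (B ∩ C).indicator φ x ∂μ :=
          (integral_indicator (hBa.inter hCa)).symm
      _ = ∫ x, (B.indicator φ * C.indicator (fun _ => (1:ℝ))) x ∂μ := by rw [heq]
      _ = (∫ x, B.indicator φ x ∂μ) * ∫ x, C.indicator (fun _ => (1:ℝ)) x ∂μ := hmul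
      _ = (∫ x in B, φ x ∂μ) * (μ C).toReal := by
          rw [integral_indicator hBa, integral_indicator hCa]
          simp [Measure.real]
  set P : Set (Set (∀ i, Ω i)) :=
    {t | ∃ B C, MeasurableSet[coordSigma Ω (v ∩ w)] B ∧
      MeasurableSet[coordSigma Ω (w \ v)] C ∧ t = B ∩ C} with hP
  have hmw_sup : coordSigma Ω w = coordSigma Ω (v ∩ w) ⊔ coordSigma Ω (w \ v) := by
    conv_lhs => rw [← Finset.sdiff_union_inter w v]
    rw [coordSigma_union, Finset.inter_comm w v, sup_comm]
  have h_gen : coordSigma Ω w = MeasurableSpace.generateFrom P := by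
    rw [hmw_sup]
    refine le_antisymm (sup_le ?_ ?_) (MeasurableSpace.generateFrom_le ?_)
    · intro B hB
      exact MeasurableSpace.measurableSet_generateFrom
        ⟨B, Set.univ, hB, MeasurableSet.univ, by simp⟩
    · intro C hC
      exact MeasurableSpace.measurableSet_generateFrom
        ⟨Set.univ, C, MeasurableSet.univ, hC, by simp⟩
    · rintro t ⟨B, C, hB, hC, rfl⟩
      exact ((le_sup_left : coordSigma Ω (v ∩ w) ≤ _) B hB).inter
        ((le_sup_right : coordSigma Ω (w \ v) ≤ _) C hC)
  have h_pi : IsPiSystem P := by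
    rintro t1 ⟨B1, C1, hB1, hC1, rfl⟩ t2 ⟨B2, C2, hB2, hC2, rfl⟩ _
    exact ⟨B1 ∩ B2, C1 ∩ C2, hB1.inter hB2, hC1.inter hC2, by rw [Set.inter_inter_inter_comm]⟩
  have hcond_m : StronglyMeasurable[coordSigma Ω v] (μ[g|coordSigma Ω (v ∩ w)]) :=
    stronglyMeasurable_condExp.mono (coordSigma_mono (Finset.inter_subset_left))
  have hcond_int : Integrable (μ[g|coordSigma Ω (v ∩ w)]) μ := integrable_condExp
  have hCprop : ∀ t, MeasurableSet[coordSigma Ω w] t →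
      ∫ x in t, (μ[g|coordSigma Ω (v ∩ w)]) x ∂μ = ∫ x in t, g x ∂μ := by
    intro t ht
    refine @MeasurableSpace.induction_on_inter (∀ i, Ω i) (coordSigma Ω w)
      (fun t _ => ∫ x in t, (μ[g|coordSigma Ω (v ∩ w)]) x ∂μ = ∫ x in t, g x ∂μ) P
      h_gen h_pi (by simp) ?_ ?_ ?_ t ht
    · rintro u ⟨B, C, hB, hC', rfl⟩
      have hBv : MeasurableSet[coordSigma Ω v] B :=
        coordSigma_mono Finset.inter_subset_left B hB
      rw [key _ hcond_int hcond_m B C hBv hC', key _ hgi hgm B C hBv hC',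
        setIntegral_condExp (coordSigma_le (v ∩ w)) hgi hB]
    · intro u hu hIH
      have hua : MeasurableSet u := coordSigma_le w u hu
      have h1 := integral_add_compl hua hcond_int
      have h2 := integral_add_compl hua hgi
      have h3 : ∫ x, (μ[g|coordSigma Ω (v ∩ w)]) x ∂μ = ∫ x, g x ∂μ :=
        integral_condExp (coordSigma_le (v ∩ w))
      linarith
    · intro s hdisj hmeas hIH
      have hsa : ∀ i, MeasurableSet (s i) := fun i => coordSigma_le w _ (hmeas i)
      rw [integral_iUnion hsa hdisj hcond_int.integrableOn,
        integral_iUnion hsa hdisj hgi.integrableOn]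
      exact tsum_congr hIH
  refine (ae_eq_condExp_of_forall_setIntegral_eq (coordSigma_le w) hgi
    (fun s _ _ => hcond_int.integrableOn) (fun s hs _ => hCprop s hs) ?_).symm
  exact (stronglyMeasurable_condExp.mono
    (coordSigma_mono (Finset.inter_subset_right))).aestronglyMeasurable

/-! ### Properties of the ANOVA components -/

variable (μ : Measure (∀ i, Ω i)) (f : (∀ i, Ω i) → ℝ)

lemma anovaComp_empty : anovaComp μ f ∅ = fun _ => ∫ x, f x ∂μ := by
  rw [anovaComp]; simp

lemma anovaComp_of_ne {v : Finset (Fin p)} (hv : v ≠ ∅) :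
    anovaComp μ f v = μ[f | coordSigma Ω v] - ∑ w ∈ v.ssubsets, anovaComp μ f w := by
  rw [anovaComp, if_neg hv, Finset.sum_attach v.ssubsets (anovaComp μ f)]

lemma anovaComp_sum_powerset {v : Finset (Fin p)} (hv : v ≠ ∅) :
    ∑ w ∈ v.powerset, anovaComp μ f w = μ[f | coordSigma Ω v] := by
  have hv' : v ∈ v.powerset := Finset.mem_powerset_self v
  have h : v.ssubsets = v.powerset.erase v := rfl
  rw [← Finset.sum_erase_add _ _ hv', ← h, anovaComp_of_ne μ f hv]
  abel

variable [IsProbabilityMeasure μ]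

lemma anova_reg (hf : MemLp f 2 μ) :
    ∀ v : Finset (Fin p), MemLp (anovaComp μ f v) 2 μ ∧
      StronglyMeasurable[coordSigma Ω v] (anovaComp μ f v) := by
  intro v
  induction v using Finset.strongInduction with
  | _ v ih =>
    by_cases hv : v = ∅
    · subst hv; rw [anovaComp_empty]
      exact ⟨memLp_const _, stronglyMeasurable_const⟩
    · rw [anovaComp_of_ne μ f hv]
      constructor
      · exact (memL2_condexp μ (coordSigma_le v) hf).sub
          (memLp_finset_sum' _ fun w hw => (ih w (Finset.mem_ssubsets.mp hw)).1)
      · exact stronglyMeasurable_condExp.sub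
          (Finset.stronglyMeasurable_sum _ fun w hw =>
            ((ih w (Finset.mem_ssubsets.mp hw)).2).mono
              (coordSigma_mono (Finset.mem_ssubsets.mp hw).subset))

lemma anova_int (hf : MemLp f 2 μ) (v : Finset (Fin p)) :
    Integrable (anovaComp μ f v) μ :=
  (anova_reg μ f hf v).1.integrable one_le_two

lemma anova_int_zero (hf : MemLp f 2 μ) :
    ∀ v : Finset (Fin p), v ≠ ∅ → ∫ x, anovaComp μ f v x ∂μ = 0 := by
  intro v
  induction v using Finset.strongInduction with
  | _ v ih =>
    intro hv
    rw [anovaComp_of_ne μ f hv]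
    simp only [Pi.sub_apply, Finset.sum_apply]
    rw [integral_sub integrable_condExp
      (integrable_finset_sum _ fun w hw => anova_int μ f hf w)]
    haveI : SigmaFinite (μ.trim (coordSigma_le (Ω := Ω) v)) := by
      have : IsFiniteMeasure (μ.trim (coordSigma_le v)) := isFiniteMeasure_trim _
      infer_instance
    rw [integral_condExp (coordSigma_le v),
      integral_finset_sum _ fun w hw => anova_int μ f hf w]
    rw [Finset.sum_eq_single_of_mem ∅
      (Finset.empty_mem_ssubsets (Finset.nonempty_iff_ne_empty.mpr hv))
      (fun w _ hw => ih w (Finset.mem_ssubsets.mp ‹w ∈ v.ssubsets›) hw)]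
    rw [anovaComp_empty]
    simp

lemma condexp_powerset (hf : MemLp f 2 μ) (v : Finset (Fin p)) :
    μ[f | coordSigma Ω v] =ᵐ[μ] ∑ w ∈ v.powerset, anovaComp μ f w := by
  by_cases hv : v = ∅
  · subst hv
    rw [Finset.powerset_empty, Finset.sum_singleton, anovaComp_empty,
      coordSigma_empty (Ω := Ω), condExp_bot]
  · rw [anovaComp_sum_powerset μ f hv]
end aux

section pi
variable {p : ℕ} {Ω : Fin p → Type*} [∀ i, MeasurableSpace (Ω i)]
variable (ν : ∀ i, Measure (Ω i)) [∀ i, IsProbabilityMeasure (ν i)]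
variable (f : (∀ i, Ω i) → ℝ)

/-- Key vanishing of conditional expectations of ANOVA components. -/
lemma anova_condexp_zero (hf : MemLp f 2 (Measure.pi ν)) :
    ∀ v : Finset (Fin p), v ≠ ∅ → ∀ w : Finset (Fin p), ¬ v ⊆ w →
      (Measure.pi ν)[anovaComp (Measure.pi ν) f v | coordSigma Ω w]
        =ᵐ[Measure.pi ν] 0 := by
  classical
  intro v
  induction v using Finset.strongInduction with
  | _ v ih =>
    intro hv w hvw
    set μ := Measure.pi ν with hμdef
    haveI := trim_sf ν w
    haveI := trim_sf ν v
    haveI := trim_sf ν (v ∩ w)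
    have hintsum : Integrable (∑ u ∈ v.ssubsets, anovaComp μ f u) μ :=
      integrable_finset_sum' _ fun u hu => anova_int μ f hf u
    have E1 : μ[anovaComp μ f v | coordSigma Ω w] =ᵐ[μ]
        μ[μ[f | coordSigma Ω v] | coordSigma Ω w]
          - μ[∑ u ∈ v.ssubsets, anovaComp μ f u | coordSigma Ω w] := by
      rw [anovaComp_of_ne μ f hv]
      exact condExp_sub integrable_condExp hintsum _
    have E2 : μ[μ[f | coordSigma Ω v] | coordSigma Ω w] =ᵐ[μ]
        ∑ u ∈ (v ∩ w).powerset, anovaComp μ f u := by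
      refine ((condexp_coordSigma ν v w stronglyMeasurable_condExp
        integrable_condExp).trans ?_)
      refine (condExp_condExp_of_le (coordSigma_mono Finset.inter_subset_left)
        (coordSigma_le v)).trans ?_
      exact condexp_powerset μ f hf (v ∩ w)
    have E3 : μ[∑ u ∈ v.ssubsets, anovaComp μ f u | coordSigma Ω w] =ᵐ[μ]
        ∑ u ∈ v.ssubsets, μ[anovaComp μ f u | coordSigma Ω w] :=
      condExp_finset_sum (fun u hu => anova_int μ f hf u) _
    have E4 : ∀ u ∈ v.ssubsets, μ[anovaComp μ f u | coordSigma Ω w] =ᵐ[μ]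
        (if u ⊆ w then anovaComp μ f u else 0) := by
      intro u hu
      by_cases huw : u ⊆ w
      · rw [if_pos huw]
        rw [condExp_of_stronglyMeasurable (coordSigma_le w)
          (((anova_reg μ f hf u).2).mono (coordSigma_mono huw)) (anova_int μ f hf u)]
      · rw [if_neg huw]
        have hune : u ≠ ∅ := by
          rintro rfl; exact huw (Finset.empty_subset w)
        exact ih u (Finset.mem_ssubsets.mp hu) hune w huw
    have hfil : v.ssubsets.filter (fun u => u ⊆ w) = (v ∩ w).powerset := by
      ext u
      simp only [Finset.mem_filter, Finset.mem_ssubsets, Finset.mem_powerset,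
        Finset.subset_inter_iff]
      constructor
      · rintro ⟨hsub, huw⟩; exact ⟨hsub.subset, huw⟩
      · rintro ⟨huv, huw⟩
        refine ⟨lt_of_le_of_ne huv ?_, huw⟩
        rintro rfl; exact hvw huw
    have E4' : ∑ u ∈ v.ssubsets, μ[anovaComp μ f u | coordSigma Ω w] =ᵐ[μ]
        ∑ u ∈ (v ∩ w).powerset, anovaComp μ f u := by
      have hall : ∀ᵐ x ∂μ, ∀ u ∈ v.ssubsets,
          (μ[anovaComp μ f u | coordSigma Ω w]) x
            = (if u ⊆ w then anovaComp μ f u else 0) x := by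
        exact (Filter.eventually_all_finset _).mpr E4
      filter_upwards [hall] with x hx
      rw [Finset.sum_apply, Finset.sum_apply]
      calc ∑ u ∈ v.ssubsets, (μ[anovaComp μ f u | coordSigma Ω w]) x
          = ∑ u ∈ v.ssubsets, (if u ⊆ w then anovaComp μ f u else 0) x :=
            Finset.sum_congr rfl hx
        _ = ∑ u ∈ v.ssubsets, (if u ⊆ w then anovaComp μ f u x else 0) := by
            refine Finset.sum_congr rfl fun u _ => ?_
            split_ifs <;> simp
        _ = ∑ u ∈ v.ssubsets.filter (fun u => u ⊆ w), anovaComp μ f u x :=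
            (Finset.sum_filter _ _).symm
        _ = ∑ u ∈ (v ∩ w).powerset, anovaComp μ f u x := by rw [hfil]
    filter_upwards [E1, E2, E3.trans E4'] with x h1 h2 h3
    rw [h1]
    simp only [Pi.sub_apply, h2, h3, Pi.zero_apply, sub_self]

/-- Orthogonality of ANOVA components. -/
lemma anova_orth (hf : MemLp f 2 (Measure.pi ν)) {v w : Finset (Fin p)} (hwv : w ⊂ v) :
    ∫ x, anovaComp (Measure.pi ν) f v x * anovaComp (Measure.pi ν) f w x ∂(Measure.pi ν)
      = 0 := by
  set μ := Measure.pi ν with hμdef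
  haveI := trim_sf ν w
  have hv : v ≠ ∅ := by
    rintro rfl; exact absurd hwv (by simp)
  have hnvw : ¬ v ⊆ w := fun h => (hwv.not_subset) h
  have hprod : Integrable (anovaComp μ f w * anovaComp μ f v) μ :=
    memL2_mul (anova_reg μ f hf w).1 (anova_reg μ f hf v).1
  have hpull : μ[anovaComp μ f w * anovaComp μ f v | coordSigma Ω w] =ᵐ[μ]
      anovaComp μ f w * μ[anovaComp μ f v | coordSigma Ω w] :=
    condExp_mul_of_stronglyMeasurable_left (anova_reg μ f hf w).2 hprod (anova_int μ f hf v)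
  have hzero := anova_condexp_zero ν f hf v hv w hnvw
  have : ∫ x, (anovaComp μ f w * anovaComp μ f v) x ∂μ = 0 := by
    rw [← integral_condExp (coordSigma_le w)]
    rw [integral_congr_ae (hpull.trans ?_)]
    · exact integral_zero _ _
    · filter_upwards [hzero] with x hx
      simp [show μ[anovaComp μ f v | coordSigma Ω w] x = 0 from hx]
  simpa [mul_comm] using this

end pi

/-- Boundedness property under independence: if `μ` is a product measure and `Var(f) > 0`,
then for every nonempty `v`, `S_v = Cov(f_v,f)/Var(f) = Var(f_v)/Var(f)`, and
consequently `0 ≤ S_v ≤ 1`. -/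
theorem sobolIndex_eq_var_ratio_and_bounded_of_indep
    {p : ℕ} (hp : 1 ≤ p) (Ω : Fin p → Type*) [∀ i, MeasurableSpace (Ω i)]
    (ν : ∀ i, Measure (Ω i)) [∀ i, IsProbabilityMeasure (ν i)]
    (μ : Measure (∀ i, Ω i)) [IsProbabilityMeasure μ] (hμ : μ = Measure.pi ν)
    (f : (∀ i, Ω i) → ℝ) (hf : MemLp f 2 μ) (hvar : 0 < fVar μ f)
    (v : Finset (Fin p)) (hv : v.Nonempty) :
    sobolIndex μ f v = fVar μ (anovaComp μ f v) / fVar μ f ∧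
    0 ≤ sobolIndex μ f v ∧ sobolIndex μ f v ≤ 1 := by
  subst hμ
  set μ := Measure.pi ν with hμdef
  set A := anovaComp μ f v with hA
  set f₀ := ∫ y, f y ∂μ with hf₀
  have hvne : v ≠ ∅ := Finset.nonempty_iff_ne_empty.mp hv
  have hA2 : MemLp A 2 μ := (anova_reg μ f hf v).1
  have hAint : Integrable A μ := anova_int μ f hf v
  have hI0 : ∫ x, A x ∂μ = 0 := anova_int_zero μ f hf v hvne
  haveI := trim_sf ν v
  -- ∫ A f = ∫ A²
  have hAf : ∫ x, A x * f x ∂μ = ∫ x, A x * A x ∂μ := by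
    have hprod : Integrable (A * f) μ := memL2_mul hA2 hf
    have hpull : μ[A * f | coordSigma Ω v] =ᵐ[μ] A * μ[f | coordSigma Ω v] :=
      condExp_mul_of_stronglyMeasurable_left (anova_reg μ f hf v).2 hprod (hf.integrable one_le_two)
    have h1 : ∫ x, A x * f x ∂μ = ∫ x, (A * μ[f | coordSigma Ω v]) x ∂μ := by
      rw [show (fun x => A x * f x) = A * f from rfl, ← integral_condExp (coordSigma_le v)]
      exact integral_congr_ae hpull
    rw [h1, show μ[f | coordSigma Ω v] = ∑ w ∈ v.powerset, anovaComp μ f w from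
      (anovaComp_sum_powerset μ f hvne).symm]
    have h2 : ∀ x, (A * ∑ w ∈ v.powerset, anovaComp μ f w) x
        = ∑ w ∈ v.powerset, A x * anovaComp μ f w x := by
      intro x
      simp [Finset.mul_sum, Finset.sum_apply]
    simp only [h2]
    rw [integral_finset_sum _ fun w hw =>
      memL2_mul hA2 (anova_reg μ f hf w).1]
    have hvmem : v ∈ v.powerset := Finset.mem_powerset_self v
    rw [← Finset.sum_erase_add _ _ hvmem]
    have hz : ∀ w ∈ v.powerset.erase v, ∫ x, A x * anovaComp μ f w x ∂μ = 0 := by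
      intro w hw
      have hwv : w ⊂ v := Finset.mem_ssubsets.mp hw
      exact anova_orth ν f hf hwv
    rw [Finset.sum_eq_zero hz, zero_add]
  -- fCov = ∫ A²  and  fVar A = ∫ A²
  have hCov : fCov μ A f = ∫ x, A x * A x ∂μ := by
    rw [fCov, ← hf₀, hI0]
    have h3 : (fun x => (A x - 0) * (f x - f₀)) = fun x => A x * f x - f₀ * A x := by
      ext x; ring
    have h4 : ∫ x, (A x * f x - f₀ * A x) ∂μ
        = (∫ x, A x * f x ∂μ) - ∫ x, f₀ * A x ∂μ :=
      integral_sub (memL2_mul hA2 hf) (hAint.const_mul f₀)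
    rw [h3, h4, integral_const_mul, hI0, hAf]
    ring
  have hVarA : fVar μ A = ∫ x, A x * A x ∂μ := by
    rw [fVar, hI0]
    congr 1; ext x; ring
  -- fVar f = ∫ (f-f₀-A)² + ∫ A²
  have hg2 : MemLp (fun x => f x - f₀ - A x) 2 μ := by
    have := (hf.sub (memLp_const f₀)).sub hA2
    exact this
  have hVarf : fVar μ f = (∫ x, (f x - f₀ - A x) ^ 2 ∂μ) + ∫ x, A x * A x ∂μ := by
    have hid : (fun x => (f x - f₀) ^ 2) = fun x =>
        (f x - f₀ - A x) ^ 2 + (2 * (A x * f x - f₀ * A x - A x * A x) + A x * A x) := by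
      ext x; ring
    have hint1 : Integrable (fun x => (f x - f₀ - A x) ^ 2) μ := hg2.integrable_sq
    have hint2a : Integrable (fun x => A x * f x - f₀ * A x - A x * A x) μ :=
      ((memL2_mul hA2 hf).sub (hAint.const_mul f₀)).sub (memL2_mul hA2 hA2)
    have hint2 : Integrable
        (fun x => 2 * (A x * f x - f₀ * A x - A x * A x) + A x * A x) μ :=
      (hint2a.const_mul 2).add (memL2_mul hA2 hA2)
    have e0 : ∫ x, ((f x - f₀ - A x) ^ 2
          + (2 * (A x * f x - f₀ * A x - A x * A x) + A x * A x)) ∂μ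
        = (∫ x, (f x - f₀ - A x) ^ 2 ∂μ)
          + ∫ x, (2 * (A x * f x - f₀ * A x - A x * A x) + A x * A x) ∂μ :=
      integral_add hint1 hint2
    have e1 : ∫ x, (2 * (A x * f x - f₀ * A x - A x * A x) + A x * A x) ∂μ
        = (∫ x, 2 * (A x * f x - f₀ * A x - A x * A x) ∂μ) + ∫ x, A x * A x ∂μ :=
      integral_add (hint2a.const_mul 2) (memL2_mul hA2 hA2)
    have e2 : ∫ x, (A x * f x - f₀ * A x - A x * A x) ∂μ
        = (∫ x, (A x * f x - f₀ * A x) ∂μ) - ∫ x, A x * A x ∂μ :=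
      integral_sub ((memL2_mul hA2 hf).sub (hAint.const_mul f₀)) (memL2_mul hA2 hA2)
    have e3 : ∫ x, (A x * f x - f₀ * A x) ∂μ
        = (∫ x, A x * f x ∂μ) - ∫ x, f₀ * A x ∂μ :=
      integral_sub (memL2_mul hA2 hf) (hAint.const_mul f₀)
    rw [fVar, ← hf₀, hid, e0, e1, integral_const_mul, e2, e3, integral_const_mul, hI0, hAf]
    ring
  have hAA_nonneg : 0 ≤ ∫ x, A x * A x ∂μ := by
    refine integral_nonneg fun x => mul_self_nonneg _
  have hAA_le : ∫ x, A x * A x ∂μ ≤ fVar μ f := by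
    rw [hVarf]
    have : 0 ≤ ∫ x, (f x - f₀ - A x) ^ 2 ∂μ := integral_nonneg fun x => sq_nonneg _
    linarith
  have hS : sobolIndex μ f v = (∫ x, A x * A x ∂μ) / fVar μ f := by
    rw [sobolIndex, hCov]
  refine ⟨by rw [hS, hVarA], ?_, ?_⟩
  · rw [hS]; exact div_nonneg hAA_nonneg hvar.le
  · rw [hS]; exact (div_le_one hvar).mpr hAA_le
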